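/- The Fourier transform of the box spline B_V equals the product over v ∈ V of g(ξ·v), where g(t) = (1 - e^{-2πit})/(2πit). -/

import Mathlib

open MeasureTheory Complex Finset
open scoped Real Classical

noncomputable section

/-- `g(t) = (1 - e^{-2πit})/(2πit)` with `g(0) = 1`. -/
def gfun (t : ℝ) : ℂ :=
  if t = 0 then 1 else
    (1 - Complex.exp (-2 * Real.pi * Complex.I * t)) / (2 * Real.pi * Complex.I * t)

variable {d : ℕ} {ι : Type*}

/-- dot product of an integer vector with a real vector -/
def dotIR (α : Fin d → ℤ) (x : Fin d → ℝ) : ℝ := ∑ i, (α i : ℝ) * x i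

/-- integer dot product -/
def dotII (α w : Fin d → ℤ) : ℤ := ∑ i, α i * w i

/-- cast of an integer vector to a real vector -/
def castV (v : Fin d → ℤ) : Fin d → ℝ := fun i => (v i : ℝ)

/-- `V` (indexed by the finset `V` via `v`) consists of nonzero integer vectors spanning `ℝ^d` -/
def Admissible (V : Finset ι) (v : ι → Fin d → ℤ) : Prop :=
  (∀ j ∈ V, v j ≠ 0) ∧
    Submodule.span ℝ ((fun j => castV (v j)) '' (V : Set ι)) = ⊤

/-- `ϱ_V` : the largest `r` such that deleting any `r` vectors leaves a spanning set. -/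
def rhoV (V : Finset ι) (v : ι → Fin d → ℤ) : ℕ :=
  sSup {r : ℕ | ∀ W ⊆ V, W.card = r →
    Submodule.span ℝ ((fun j => castV (v j)) '' ((V \ W : Finset ι) : Set ι)) = ⊤}

/-- membership in the family `Λ` -/
def InLambda (V : Finset ι) (v : ι → Fin d → ℤ) (U : Finset ι) : Prop :=
  U ⊆ V ∧ U.card = rhoV V v + 1 ∧
    Submodule.span ℝ ((fun j => castV (v j)) '' ((V \ U : Finset ι) : Set ι)) ≠ ⊤

/-- unimodularity: every `d`-subfamily has determinant of absolute value at most 1 -/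
def Unimodular (V : Finset ι) (v : ι → Fin d → ℤ) : Prop :=
  ∀ w : Fin d → ι, Function.Injective w → (∀ i, w i ∈ V) →
    |Matrix.det (fun i k => v (w i) k)| ≤ 1

/-- the Fourier transform of the box spline, `∏_{v∈V} g(x⋅v)` -/
def hatB (V : Finset ι) (v : ι → Fin d → ℤ) (x : Fin d → ℝ) : ℂ :=
  ∏ j ∈ V, gfun (dotIR (v j) x)

/-- partial derivative in direction `i` -/
def pderivC (i : Fin d) (f : (Fin d → ℝ) → ℂ) : (Fin d → ℝ) → ℂ :=
  fun x => fderiv ℝ f x (Pi.single i 1)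

/-- `D^β`, the multi-index partial derivative -/
def Dmulti (β : Fin d → ℕ) (f : (Fin d → ℝ) → ℂ) : (Fin d → ℝ) → ℂ :=
  (List.finRange d).foldr (fun i F => (pderivC i)^[β i] F) f

/-- directional derivative `D_w` -/
def dirDeriv (w : Fin d → ℝ) (f : (Fin d → ℝ) → ℂ) : (Fin d → ℝ) → ℂ :=
  fun x => fderiv ℝ f x w

/-- `D_U = ∏_{v∈U} D_v` (real vectors version) -/
def DUder (U : Finset ι) (v : ι → Fin d → ℝ) (f : (Fin d → ℝ) → ℂ) : (Fin d → ℝ) → ℂ :=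
  U.toList.foldr (fun j F => dirDeriv (v j) F) f

/-- the `k`-th Bernoulli function `B^k(t) = ∑_{n≠0} e^{2πint}/(2πin)^k` -/
def Bern (k : ℕ) (t : ℝ) : ℂ :=
  ∑' n : ℤ, if n = 0 then 0 else
    Complex.exp (2 * Real.pi * Complex.I * n * t) / (2 * Real.pi * Complex.I * n) ^ k

/-- the Bernoulli spline `B(V,U)` -/
def BVU (V U : Finset ι) (v : ι → Fin d → ℤ) (x : Fin d → ℝ) : ℂ :=
  ∑' α : Fin d → ℤ,
    if α ≠ 0 ∧ ∀ j ∈ V \ U, dotII α (v j) = 0 then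
      (∏ j ∈ U, (1 : ℂ) / (2 * Real.pi * Complex.I * (dotII α (v j) : ℤ))) *
        Complex.exp (2 * Real.pi * Complex.I * dotIR α x)
    else 0

/-- the homogeneous polynomial `x ↦ ∏_{v∈U}(x⋅v)` (real vectors version) -/
def polyU (U : Finset ι) (v : ι → Fin d → ℝ) (x : Fin d → ℝ) : ℂ :=
  ∏ j ∈ U, ((∑ i, x i * v j i : ℝ) : ℂ)

/-- `C(β,U) = D^β (∏_{v∈U} (x⋅v))`, a constant (evaluated at `0`) -/
def Cconst (U : Finset ι) (v : ι → Fin d → ℤ) (β : Fin d → ℕ) : ℂ :=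
  Dmulti β (polyU U fun j => castV (v j)) 0

/-- `L_β`, given by its Fourier expansion (Lemma 2.1);
equals `P([]^β) - []^β` for the box-spline orthogonal projection `P`. -/
def Lfun (V : Finset ι) (v : ι → Fin d → ℤ) (β : Fin d → ℕ) (x : Fin d → ℝ) : ℂ :=
  (1 / (2 * Real.pi * Complex.I)) ^ (∑ i, β i) *
    ∑' α : Fin d → ℤ, if α ≠ 0 then
      Dmulti β (hatB V v) (castV α) *
        Complex.exp (2 * Real.pi * Complex.I * dotIR α x)
    else 0

/-- the unit cube in `ℝ^d` -/
def unitCube (d : ℕ) : Set (Fin d → ℝ) := Set.univ.pi fun _ : Fin d => Set.Icc (0:ℝ) 1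

lemma int_exp (c : ℝ) :
    ∫ t in Set.Icc (0:ℝ) 1, Complex.exp (-2 * Real.pi * Complex.I * c * t) = gfun c := by
  rw [MeasureTheory.integral_Icc_eq_integral_Ioc,
    ← intervalIntegral.integral_of_le (zero_le_one)]
  by_cases hc : c = 0
  · simp [hc, gfun]
  · have hc' : (-2 * Real.pi * Complex.I * c : ℂ) ≠ 0 := by
      simp [Real.pi_ne_zero, Complex.I_ne_zero, hc]
    rw [show (fun t : ℝ => Complex.exp (-2 * Real.pi * Complex.I * c * t)) =
        fun t : ℝ => Complex.exp ((-2 * Real.pi * Complex.I * c) * t) from rfl,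
      integral_exp_mul_complex hc']
    simp only [gfun, hc, if_false]
    rw [Complex.ofReal_zero, mul_zero, Complex.exp_zero, Complex.ofReal_one, mul_one]
    rw [div_eq_div_iff hc' (by simpa using hc')]
    ring

lemma key_exp {d n : ℕ} (v : Fin n → Fin d → ℤ) (ξ : Fin d → ℝ) (u : Fin n → ℝ) :
    Complex.exp (-2 * Real.pi * Complex.I * ((∑ i, ξ i * ∑ j, u j * (v j i : ℝ) : ℝ) : ℂ)) =
      ∏ j, Complex.exp (-2 * Real.pi * Complex.I * (dotIR (v j) ξ) * u j) := by
  have h1 : (∑ i, ξ i * ∑ j, u j * (v j i : ℝ)) = ∑ j, dotIR (v j) ξ * u j := by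
    simp only [Finset.mul_sum, dotIR, Finset.sum_mul]
    rw [Finset.sum_comm]
    congr 1; funext j; congr 1; funext i; ring
  rw [h1]
  push_cast
  rw [Finset.mul_sum, Complex.exp_sum]
  congr 1; funext j; ring_nf

/-- the Fourier transform of the box spline is `∏_{v∈V} g(ξ⋅v)`. -/
theorem statement1 {d n : ℕ} (v : Fin n → Fin d → ℤ)
    (hv : ∀ j, v j ≠ 0)
    (hspan : Submodule.span ℝ (Set.range fun j => castV (v j)) = ⊤)
    (B : (Fin d → ℝ) → ℝ)
    (hB : ∀ f : (Fin d → ℝ) → ℂ, Continuous f →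
      ∫ x, f x * (B x : ℂ) =
        ∫ u in (Set.univ.pi fun _ : Fin n => Set.Icc (0:ℝ) 1),
          f (fun i => ∑ j, u j * (v j i : ℝ)))
    (ξ : Fin d → ℝ) :
    ∫ x, (B x : ℂ) * Complex.exp (-2 * Real.pi * Complex.I * (∑ i, ξ i * x i)) =
      ∏ j : Fin n, gfun (dotIR (v j) ξ) := by
  have hfc : Continuous fun x : Fin d → ℝ =>
      Complex.exp (-2 * Real.pi * Complex.I * ((∑ i, ξ i * x i : ℝ) : ℂ)) := by
    apply Complex.continuous_exp.comp
    apply Continuous.mul continuous_const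
    exact Complex.continuous_ofReal.comp (by continuity)
  calc ∫ x, (B x : ℂ) * Complex.exp (-2 * Real.pi * Complex.I * (∑ i, ξ i * x i))
      = ∫ x, Complex.exp (-2 * Real.pi * Complex.I * ((∑ i, ξ i * x i : ℝ) : ℂ)) * (B x : ℂ) := by
        simp [mul_comm]
    _ = ∫ u in (Set.univ.pi fun _ : Fin n => Set.Icc (0:ℝ) 1),
          Complex.exp
            (-2 * Real.pi * Complex.I * ((∑ i, ξ i * ∑ j, u j * (v j i : ℝ) : ℝ) : ℂ)) :=
        hB _ hfc
    _ = ∫ u in (Set.univ.pi fun _ : Fin n => Set.Icc (0:ℝ) 1),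
          ∏ j, Complex.exp (-2 * Real.pi * Complex.I * (dotIR (v j) ξ) * u j) :=
        integral_congr_ae (Filter.Eventually.of_forall fun u => key_exp v ξ u)
    _ = ∫ u : Fin n → ℝ, ∏ j, Set.indicator (Set.Icc (0:ℝ) 1)
          (fun t => Complex.exp (-2 * Real.pi * Complex.I * (dotIR (v j) ξ) * t)) (u j) := by
        rw [← integral_indicator (MeasurableSet.univ_pi fun _ => measurableSet_Icc)]
        congr 1
        funext u
        by_cases hu : u ∈ (Set.univ.pi fun _ : Fin n => Set.Icc (0:ℝ) 1)
        · rw [Set.indicator_of_mem hu]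
          refine Finset.prod_congr rfl fun j _ => ?_
          rw [Set.indicator_of_mem (hu j (Set.mem_univ j))
            (fun t => Complex.exp (-2 * Real.pi * Complex.I * (dotIR (v j) ξ) * t))]
        · rw [Set.indicator_of_notMem hu]
          simp only [Set.mem_pi, Set.mem_univ, true_implies, not_forall] at hu
          obtain ⟨j, hj⟩ := hu
          exact (Finset.prod_eq_zero (Finset.mem_univ j)
            (Set.indicator_of_notMem hj _)).symm
    _ = ∏ j, ∫ t : ℝ, Set.indicator (Set.Icc (0:ℝ) 1)
          (fun t => Complex.exp (-2 * Real.pi * Complex.I * (dotIR (v j) ξ) * t)) t :=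
        MeasureTheory.integral_fintype_prod_eq_prod _
    _ = ∏ j, gfun (dotIR (v j) ξ) := by
        refine Finset.prod_congr rfl fun j _ => ?_
        rw [integral_indicator measurableSet_Icc]
        exact int_exp _

end
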